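/- Dodgson's identity: for every n×n matrix A over a commutative ring and indices i, j with 0 ≤ i, j ≤ n−2, det(A)·det(A_{i,n−1}^{j,n−1}) = det(A_i^j)·det(A_{n−1}^{n−1}) − det(A_i^{n−1})·det(A_{n−1}^j), where subscripts denote deleted rows and superscripts deleted columns. -/

import Mathlib

open Matrix

private lemma updateColumn_swap {R : Type*} [CommRing R] {m : ℕ}
    (M : Matrix (Fin m) (Fin m) R) {a b : Fin m} (hab : a ≠ b) (x y : Fin m → R) :
    (M.updateCol a x).updateCol b y = (M.updateCol b y).updateCol a x := by
  ext r c
  simp only [Matrix.updateCol_apply]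
  by_cases h1 : c = b <;> by_cases h2 : c = a
  · exact absurd (h2.symm.trans h1) hab
  · simp [h1, h2, (Ne.symm hab : b ≠ a)]
  · simp [h1, h2, hab]
  · simp [h1, h2]

/-- determinant of a matrix with one column replaced by a basis vector -/
private lemma det_updateColumn_single {R : Type*} [CommRing R] {m : ℕ}
    (M : Matrix (Fin (m + 1)) (Fin (m + 1)) R) (c r : Fin (m + 1)) :
    (M.updateCol c (Pi.single r 1)).det =
      (-1 : R) ^ ((r : ℕ) + c) * (Mᵀ.submatrix c.succAbove r.succAbove).det := by
  have h1 : (M.updateCol c (Pi.single r 1)).det = adjugate Mᵀ r c := by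
    rw [adjugate_apply, updateRow_transpose, det_transpose]
  rw [h1, adjugate_fin_succ_eq_det_submatrix, Nat.add_comm (c : ℕ) (r : ℕ)]

private lemma dodgson_aux {R : Type*} [CommRing R] (n : ℕ)
    (A : Matrix (Fin (n + 2)) (Fin (n + 2)) R) (i j : Fin (n + 1)) :
    A.det * (A.det *
        ((A.submatrix Fin.castSucc Fin.castSucc).submatrix i.succAbove j.succAbove).det) =
      A.det * ((A.submatrix i.castSucc.succAbove j.castSucc.succAbove).det *
          (A.submatrix Fin.castSucc Fin.castSucc).det -
        (A.submatrix i.castSucc.succAbove Fin.castSucc).det *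
          (A.submatrix Fin.castSucc j.castSucc.succAbove).det) := by
  classical
  set i' : Fin (n + 2) := i.castSucc with hi'
  set j' : Fin (n + 2) := j.castSucc with hj'
  set l : Fin (n + 2) := Fin.last (n + 1) with hl
  have hj'l : j' ≠ l := (Fin.castSucc_lt_last j).ne
  have hi'l : i' ≠ l := (Fin.castSucc_lt_last i).ne
  set u : Fin (n + 2) → R := Pi.single i' 1 with hu
  set v : Fin (n + 2) → R := Pi.single l 1 with hv
  -- the bijection sending `inl k` to the k-th column other than j', l
  set g : Fin n ⊕ Fin 2 → Fin (n + 2) :=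
    Sum.elim (fun k => (j.succAbove k).castSucc) (fun t => if t = 0 then j' else l) with hg
  have hginj : Function.Injective g := by
    rintro (a | s) (b | t) h
    · simp only [hg, Sum.elim_inl] at h
      exact congrArg Sum.inl ((j.succAbove_right_injective) (Fin.castSucc_injective _ h))
    · exfalso
      simp only [hg, Sum.elim_inl, Sum.elim_inr] at h
      by_cases ht : t = 0
      · rw [if_pos ht] at h
        exact j.succAbove_ne a (Fin.castSucc_injective _ h)
      · rw [if_neg ht] at h
        exact (Fin.castSucc_lt_last _).ne h
    · exfalso
      simp only [hg, Sum.elim_inl, Sum.elim_inr] at h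
      by_cases hs : s = 0
      · rw [if_pos hs] at h
        exact j.succAbove_ne b (Fin.castSucc_injective _ h.symm)
      · rw [if_neg hs] at h
        exact (Fin.castSucc_lt_last _).ne h.symm
    · simp only [hg, Sum.elim_inr] at h
      by_cases hs : s = 0 <;> by_cases ht : t = 0
      · rw [hs, ht]
      · rw [if_pos hs, if_neg ht] at h
        exact absurd h hj'l
      · rw [if_neg hs, if_pos ht] at h
        exact absurd h.symm hj'l
      · have hs' : (s : ℕ) ≠ 0 := fun hh => hs (Fin.ext hh)
        have ht' : (t : ℕ) ≠ 0 := fun hh => ht (Fin.ext hh)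
        have h1 := s.isLt
        have h2 := t.isLt
        have : (s : ℕ) = (t : ℕ) := by omega
        rw [Fin.ext this]
  have hgbij : Function.Bijective g :=
    (Fintype.bijective_iff_injective_and_card g).2 ⟨hginj, by simp⟩
  set σ : (Fin n ⊕ Fin 2) ≃ Fin (n + 2) := Equiv.ofBijective g hgbij with hσ
  set c2 : Fin 2 → Fin (n + 2) := fun t => if t = 0 then i' else l with hc2
  set F : Matrix (Fin n ⊕ Fin 2) (Fin n ⊕ Fin 2) R :=
    Matrix.fromBlocks 1 (fun k t => adjugate A (g (Sum.inl k)) (c2 t)) 0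
      (fun s t => adjugate A (g (Sum.inr s)) (c2 t)) with hF
  set N : Matrix (Fin (n + 2)) (Fin (n + 2)) R := F.submatrix σ.symm σ.symm with hN
  have hσ0 : σ (Sum.inr 0) = j' := rfl
  have hσ1 : σ (Sum.inr 1) = l := rfl
  have hc20 : c2 0 = i' := rfl
  have hc21 : c2 1 = l := rfl
  -- evaluating F at the special columns
  have hFr : ∀ (k : Fin (n + 2)) (t : Fin 2), F (σ.symm k) (Sum.inr t) = adjugate A k (c2 t) := by
    intro k t
    have hk : g (σ.symm k) = k := σ.apply_symm_apply k
    cases h : σ.symm k with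
    | inl a =>
      rw [h] at hk
      simp only [hF]
      erw [Matrix.fromBlocks_apply₁₂]
      rw [hk]
    | inr s =>
      rw [h] at hk
      simp only [hF]
      erw [Matrix.fromBlocks_apply₂₂]
      rw [hk]
  have hFl : ∀ (k : Fin (n + 2)) (k0 : Fin n),
      F (σ.symm k) (Sum.inl k0) =
        (1 : Matrix (Fin (n + 2)) (Fin (n + 2)) R) k (σ (Sum.inl k0)) := by
    intro k k0
    cases h : σ.symm k with
    | inl a =>
      have hk : k = σ (Sum.inl a) := by rw [← h, σ.apply_symm_apply]
      simp only [hF, Matrix.fromBlocks_apply₁₁, Matrix.one_apply, hk]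
      refine if_congr ?_ rfl rfl
      constructor
      · rintro rfl; rfl
      · intro h'; exact Sum.inl.inj (σ.injective h')
    | inr s =>
      have hk : k = σ (Sum.inr s) := by rw [← h, σ.apply_symm_apply]
      simp only [hF]
      erw [Matrix.fromBlocks_apply₂₁]
      simp only [Matrix.zero_apply, Matrix.one_apply, hk]
      rw [if_neg]
      intro h'
      exact Sum.inr_ne_inl (σ.injective h')
  -- the product A * N
  have hAN : A * N = (A.updateCol j' (A.det • u)).updateCol l (A.det • v) := by
    ext r c
    by_cases hc1 : c = j'
    · subst hc1
      have hs : σ.symm j' = Sum.inr 0 := by rw [Equiv.symm_apply_eq]; exact hσ0.symm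
      rw [Matrix.mul_apply]
      simp only [hN, Matrix.submatrix_apply, hs]
      have h1 : ∀ k, A r k * F (σ.symm k) (Sum.inr 0) = A r k * adjugate A k i' := by
        intro k; rw [hFr, hc20]
      rw [Finset.sum_congr rfl fun k _ => h1 k]
      have h2 : ∑ k, A r k * adjugate A k i' =
          (A.det • (1 : Matrix (Fin (n + 2)) (Fin (n + 2)) R)) r i' := by
        rw [← Matrix.mul_apply, Matrix.mul_adjugate]
      rw [h2, Matrix.updateCol_apply, if_neg hj'l, Matrix.updateCol_apply, if_pos rfl]
      simp [hu, Matrix.one_apply, Pi.single_apply]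
    · by_cases hc2' : c = l
      · subst hc2'
        have hs : σ.symm l = Sum.inr 1 := by rw [Equiv.symm_apply_eq]; exact hσ1.symm
        rw [Matrix.mul_apply]
        simp only [hN, Matrix.submatrix_apply, hs]
        have h1 : ∀ k, A r k * F (σ.symm k) (Sum.inr 1) = A r k * adjugate A k l := by
          intro k; rw [hFr, hc21]
        rw [Finset.sum_congr rfl fun k _ => h1 k]
        have h2 : ∑ k, A r k * adjugate A k l =
            (A.det • (1 : Matrix (Fin (n + 2)) (Fin (n + 2)) R)) r l := by
          rw [← Matrix.mul_apply, Matrix.mul_adjugate]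
        rw [h2, Matrix.updateCol_apply, if_pos rfl]
        simp [hv, Matrix.one_apply, Pi.single_apply]
      · -- other columns: N agrees with the identity
        obtain ⟨x, hx⟩ := σ.surjective c
        have hx' : ∃ k0, x = Sum.inl k0 := by
          cases x with
          | inl k0 => exact ⟨k0, rfl⟩
          | inr t =>
            exfalso
            by_cases ht : t = (0 : Fin 2)
            · subst ht
              exact hc1 (hσ0.symm.trans hx).symm
            · have ht1 : t = 1 := by
                have hs' : (t : ℕ) ≠ 0 := fun hh => ht (Fin.ext hh)
                have h2 := t.isLt
                exact Fin.ext (by omega)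
              subst ht1
              exact hc2' (hσ1.symm.trans hx).symm
        obtain ⟨k0, rfl⟩ := hx'
        have hs : σ.symm c = Sum.inl k0 := by rw [← hx, Equiv.symm_apply_apply]
        rw [Matrix.mul_apply]
        simp only [hN, Matrix.submatrix_apply, hs]
        have h1 : ∀ k, A r k * F (σ.symm k) (Sum.inl k0) =
            A r k * (1 : Matrix (Fin (n + 2)) (Fin (n + 2)) R) k c := by
          intro k; rw [hFl, hx]
        rw [Finset.sum_congr rfl fun k _ => h1 k, ← Matrix.mul_apply, Matrix.mul_one]
        rw [Matrix.updateCol_apply, if_neg hc2', Matrix.updateCol_apply, if_neg hc1]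
  -- determinant of N
  have hdetN : N.det = adjugate A j' i' * adjugate A l l - adjugate A j' l * adjugate A l i' := by
    rw [hN, Matrix.det_submatrix_equiv_self σ.symm, hF]
    erw [Matrix.det_fromBlocks_zero₂₁]
    rw [Matrix.det_one, one_mul]
    erw [Matrix.det_fin_two]
    have e1 : g (Sum.inr 0) = j' := rfl
    have e2 : g (Sum.inr 1) = l := rfl
    simp only [e1, e2, hc20, hc21]
  -- determinant of the right hand side of hAN
  have hsub : (A.updateCol j' u).submatrix
        (Fin.castSucc : Fin (n + 1) → Fin (n + 2)) Fin.castSucc =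
      (A.submatrix Fin.castSucc Fin.castSucc).updateCol j (Pi.single i 1) := by
    ext r c
    simp only [Matrix.submatrix_apply, Matrix.updateCol_apply, hu, hj', hi',
      Fin.castSucc_inj, Pi.single_apply]
  have hdetC : ((A.updateCol j' (A.det • u)).updateCol l (A.det • v)).det =
      A.det * (A.det * ((-1 : R) ^ ((i : ℕ) + j) *
        ((A.submatrix Fin.castSucc Fin.castSucc).submatrix i.succAbove j.succAbove).det)) := by
    rw [Matrix.det_updateCol_smul,
      updateColumn_swap A hj'l (A.det • u) v,
      Matrix.det_updateCol_smul,
      updateColumn_swap A (Ne.symm hj'l) v u,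
      hv, det_updateColumn_single]
    rw [hl, Fin.succAbove_last, Fin.val_last, ← Matrix.transpose_submatrix, Matrix.det_transpose]
    rw [hsub, det_updateColumn_single, ← Matrix.transpose_submatrix, Matrix.det_transpose]
    have heven : (-1 : R) ^ ((n + 1 : ℕ) + (n + 1)) = 1 := Even.neg_one_pow ⟨n + 1, rfl⟩
    rw [heven, Nat.add_comm (i : ℕ) (j : ℕ)]
    ring
  -- the minors occurring in the adjugate
  have hadj1 : adjugate A j' i' =
      (-1 : R) ^ ((i : ℕ) + j) * (A.submatrix i'.succAbove j'.succAbove).det := by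
    rw [adjugate_fin_succ_eq_det_submatrix, hi', hj', Fin.coe_castSucc, Fin.coe_castSucc]
  have hadj2 : adjugate A l l = (A.submatrix Fin.castSucc Fin.castSucc).det := by
    rw [adjugate_fin_succ_eq_det_submatrix, hl, Fin.succAbove_last, Fin.val_last,
      Even.neg_one_pow ⟨n + 1, rfl⟩, one_mul]
  have hadj3 : adjugate A j' l =
      (-1 : R) ^ ((n + 1) + (j : ℕ)) * (A.submatrix Fin.castSucc j'.succAbove).det := by
    rw [adjugate_fin_succ_eq_det_submatrix, hl, Fin.succAbove_last, Fin.val_last, hj',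
      Fin.coe_castSucc]
  have hadj4 : adjugate A l i' =
      (-1 : R) ^ ((i : ℕ) + (n + 1)) * (A.submatrix i'.succAbove Fin.castSucc).det := by
    rw [adjugate_fin_succ_eq_det_submatrix, hl, Fin.succAbove_last, Fin.val_last, hi',
      Fin.coe_castSucc]
  have hmain : A.det * N.det =
      ((A.updateCol j' (A.det • u)).updateCol l (A.det • v)).det := by
    rw [← hAN, Matrix.det_mul]
  rw [hdetN, hdetC, hadj1, hadj2, hadj3, hadj4] at hmain
  have hε2 : (-1 : R) ^ ((i : ℕ) + j) * (-1 : R) ^ ((i : ℕ) + j) = 1 := by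
    rw [← pow_add]
    exact Even.neg_one_pow ⟨(i : ℕ) + j, by ring⟩
  have hsign : (-1 : R) ^ ((n + 1) + (j : ℕ)) * ((-1 : R) ^ ((i : ℕ) + (n + 1))) =
      (-1 : R) ^ ((i : ℕ) + j) := by
    rw [← pow_add]
    have h : ((n + 1) + (j : ℕ)) + ((i : ℕ) + (n + 1)) = ((i : ℕ) + j) + 2 * (n + 1) := by ring
    rw [h, pow_add, pow_mul]
    norm_num
  set ε : R := (-1 : R) ^ ((i : ℕ) + j) with hεdef
  set d : R := A.det
  set P1 := (A.submatrix i'.succAbove j'.succAbove).det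
  set Pll := (A.submatrix Fin.castSucc Fin.castSucc).det
  set Pj := (A.submatrix Fin.castSucc j'.succAbove).det
  set Pi2 := (A.submatrix i'.succAbove Fin.castSucc).det
  set m := ((A.submatrix Fin.castSucc Fin.castSucc).submatrix i.succAbove j.succAbove).det
  linear_combination (-ε) * hmain + (d * P1 * Pll - d * d * m - d * Pj * Pi2) * hε2 +
    (-(d * Pi2 * Pj * ε)) * hsign

/-- Dodgson's identity: for an `(n+2) × (n+2)` matrix `A` over a commutative ring and
indices `i, j ≤ n` (i.e. not the last row/column),
`det A * det A_{i,last}^{j,last} = det A_i^j * det A_{last}^{last} - det A_i^{last} * det A_{last}^j`,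
where subscripts denote deleted rows and superscripts deleted columns. -/
theorem dodgson_identity {R : Type*} [CommRing R] (n : ℕ)
    (A : Matrix (Fin (n + 2)) (Fin (n + 2)) R) (i j : Fin (n + 1)) :
    A.det * ((A.submatrix Fin.castSucc Fin.castSucc).submatrix i.succAbove j.succAbove).det =
      (A.submatrix i.castSucc.succAbove j.castSucc.succAbove).det *
          (A.submatrix Fin.castSucc Fin.castSucc).det -
        (A.submatrix i.castSucc.succAbove Fin.castSucc).det *
          (A.submatrix Fin.castSucc j.castSucc.succAbove).det := by
  classical
  set X : Matrix (Fin (n + 2)) (Fin (n + 2)) (MvPolynomial (Fin (n + 2) × Fin (n + 2)) ℤ) :=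
    mvPolynomialX (Fin (n + 2)) (Fin (n + 2)) ℤ with hX
  have hgen := dodgson_aux n X i j
  have hXdet : X.det ≠ 0 := det_mvPolynomialX_ne_zero _ ℤ
  have hgen' := mul_left_cancel₀ hXdet hgen
  set φ : MvPolynomial (Fin (n + 2) × Fin (n + 2)) ℤ →+* R :=
    MvPolynomial.eval₂Hom (Int.castRingHom R) (fun p => A p.1 p.2) with hφ
  have hA : X.map ⇑φ = A := by
    rw [hX, hφ, MvPolynomial.coe_eval₂Hom]
    exact mvPolynomialX_map_eval₂ _ A
  have h := congrArg φ hgen'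
  simp only [_root_.map_mul, _root_.map_sub, RingHom.map_det, RingHom.mapMatrix_apply,
    ← Matrix.submatrix_map, hA] at h
  exact h
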